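/- arXiv:2103.13531 — 7 statements merged into one kernel-verified Lean document; each statement's English description precedes it below -/
import Mathlib

section
/- If α : I → ℝ³ is a unit-speed curve with everywhere positive curvature that is a rectifying curve (its position vector always lies in the rectifying plane spanned by the tangent t and binormal b), then there exist constants a ≠ 0 and b such that α(s) = (s + b/a)·t(s) + (1/a)·b(s) for all s. -/
open Real Set
open scoped RealInnerProductSpace

noncomputable section

/-- Euclidean 3-space. -/
abbrev E3 := EuclideanSpace ℝ (Fin 3)

/-- Constructor for points of `E3`. -/
def e3 (x y z : ℝ) : E3 := (WithLp.equiv 2 (Fin 3 → ℝ)).symm ![x, y, z]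

/-- The cross product on `E3`. -/
def cross3 (a b : E3) : E3 :=
  e3 (a 1 * b 2 - a 2 * b 1) (a 2 * b 0 - a 0 * b 2) (a 0 * b 1 - a 1 * b 0)

lemma inner_cross_left (a b : E3) : ⟪a, cross3 a b⟫ = 0 := by
  simp [cross3, e3, WithLp.equiv_symm_apply, PiLp.inner_apply, Fin.sum_univ_three]; ring

lemma inner_cross_right (a b : E3) : ⟪b, cross3 a b⟫ = 0 := by
  simp [cross3, e3, WithLp.equiv_symm_apply, PiLp.inner_apply, Fin.sum_univ_three]; ring

lemma inner_cross_self (a b : E3) :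
    ⟪cross3 a b, cross3 a b⟫ = ⟪a,a⟫ * ⟪b,b⟫ - ⟪a,b⟫ * ⟪a,b⟫ := by
  simp [cross3, e3, WithLp.equiv_symm_apply, PiLp.inner_apply, Fin.sum_univ_three, -inner_self_eq_norm_sq_to_K]; ring

lemma const_of_hasDerivAt_zero {I : Set ℝ} (hIo : IsOpen I) (hIc : Convex ℝ I)
    {h : ℝ → ℝ} (hd : ∀ s ∈ I, HasDerivAt h 0 s) {x y : ℝ} (hx : x ∈ I) (hy : y ∈ I) :
    h x = h y := by
  refine hIc.is_const_of_fderivWithin_eq_zero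
    (fun s hs => (hd s hs).differentiableAt.differentiableWithinAt) (fun s hs => ?_) hx hy
  rw [fderivWithin_of_isOpen hIo hs, (hd s hs).hasFDerivAt.fderiv]
  ext u; simp

lemma eq_zero_of_orthonormal3 {t n b v : E3}
    (htt : ⟪t,t⟫ = 1) (hnn : ⟪n,n⟫ = 1) (hbb : ⟪b,b⟫ = 1)
    (htn : ⟪t,n⟫ = 0) (htb : ⟪t,b⟫ = 0) (hnb : ⟪n,b⟫ = 0)
    (h1 : ⟪v,t⟫ = 0) (h2 : ⟪v,n⟫ = 0) (h3 : ⟪v,b⟫ = 0) : v = 0 := by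
  have horth : Orthonormal ℝ ![t, n, b] := by
    constructor
    · intro i
      fin_cases i <;> simp_all [norm_eq_sqrt_real_inner, -inner_self_eq_norm_sq_to_K]
    · intro i j hij
      fin_cases i <;> fin_cases j <;>
        simp_all [real_inner_comm t n, real_inner_comm t b, real_inner_comm n b]
  have hspan : Submodule.span ℝ (Set.range ![t, n, b]) = ⊤ :=
    horth.linearIndependent.span_eq_top_of_card_eq_finrank (by simp [finrank_euclideanSpace])
  have hv : v ∈ Submodule.span ℝ (Set.range ![t, n, b]) := by rw [hspan]; trivial
  rw [Submodule.mem_span_range_iff_exists_fun] at hv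
  obtain ⟨c, hc⟩ := hv
  have h0 : ⟪v, v⟫ = 0 := by
    nth_rewrite 2 [← hc]
    rw [inner_sum]
    simp only [real_inner_smul_right, Fin.sum_univ_three, Matrix.cons_val_zero,
      Matrix.cons_val_one, Matrix.head_cons, Matrix.cons_val_two, Matrix.tail_cons,
      h1, h2, h3, mul_zero, add_zero]
  exact inner_self_eq_zero.mp h0

/-- A unit-speed rectifying curve with positive curvature has the form
`α(s) = (s + b/a) • t(s) + (1/a) • b(s)`. -/
theorem rectifying_form (I : Set ℝ) (hIo : IsOpen I) (hIc : Convex ℝ I)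
    (α T N B : ℝ → E3) (κ τ : ℝ → ℝ)
    (hα : ∀ s ∈ I, HasDerivAt α (T s) s)
    (hT : ∀ s ∈ I, HasDerivAt T (κ s • N s) s)
    (hN : ∀ s ∈ I, HasDerivAt N ((-κ s) • T s + τ s • B s) s)
    (hB : ∀ s ∈ I, HasDerivAt B ((-τ s) • N s) s)
    (hTu : ∀ s ∈ I, ‖T s‖ = 1)
    (hNu : ∀ s ∈ I, ‖N s‖ = 1)
    (hBdef : ∀ s ∈ I, B s = cross3 (T s) (N s))
    (hκ : ∀ s ∈ I, 0 < κ s)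
    (hrect : ∀ s ∈ I, ⟪α s, N s⟫ = 0) :
    ∃ a b : ℝ, a ≠ 0 ∧ ∀ s ∈ I, α s = (s + b / a) • T s + (1 / a) • B s := by
  by_cases hne : I.Nonempty
  swap
  · exact ⟨1, 0, one_ne_zero, fun s hs => absurd ⟨s, hs⟩ hne⟩
  obtain ⟨s0, hs0⟩ := hne
  -- basic inner products
  have hTT : ∀ s ∈ I, ⟪T s, T s⟫ = 1 := fun s hs => by
    rw [real_inner_self_eq_norm_sq, hTu s hs]; norm_num
  have hNN : ∀ s ∈ I, ⟪N s, N s⟫ = 1 := fun s hs => by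
    rw [real_inner_self_eq_norm_sq, hNu s hs]; norm_num
  -- ⟪T, N⟫ = 0
  have hTN : ∀ s ∈ I, ⟪T s, N s⟫ = 0 := by
    intro s hs
    have hd1 : HasDerivAt (fun u => ⟪T u, T u⟫) (⟪T s, κ s • N s⟫ + ⟪κ s • N s, T s⟫) s :=
      (hT s hs).inner ℝ (hT s hs)
    have heq : (fun u => ⟪T u, T u⟫) =ᶠ[nhds s] fun _ => (1:ℝ) := by
      filter_upwards [hIo.mem_nhds hs] with u hu
      exact hTT u hu
    have hd2 : HasDerivAt (fun u => ⟪T u, T u⟫) 0 s :=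
      (hasDerivAt_const s (1:ℝ)).congr_of_eventuallyEq heq
    have huniq := hd1.unique hd2
    rw [real_inner_smul_right, real_inner_smul_left, real_inner_comm (T s) (N s)] at huniq
    have hκs := (hκ s hs).ne'
    have hx : κ s * ⟪T s, N s⟫ = 0 := by linarith
    exact (mul_eq_zero.mp hx).resolve_left hκs
  have hTB : ∀ s ∈ I, ⟪T s, B s⟫ = 0 := fun s hs => by
    rw [hBdef s hs]; exact inner_cross_left _ _
  have hNB : ∀ s ∈ I, ⟪N s, B s⟫ = 0 := fun s hs => by
    rw [hBdef s hs]; exact inner_cross_right _ _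
  have hBB : ∀ s ∈ I, ⟪B s, B s⟫ = 1 := fun s hs => by
    rw [hBdef s hs, inner_cross_self, hTT s hs, hNN s hs, hTN s hs]; ring
  have hBT : ∀ s ∈ I, ⟪B s, T s⟫ = 0 := fun s hs => by
    rw [real_inner_comm]; exact hTB s hs
  have hBN : ∀ s ∈ I, ⟪B s, N s⟫ = 0 := fun s hs => by
    rw [real_inner_comm]; exact hNB s hs
  -- ⟪α, B⟫ is constant
  have hgd : ∀ s ∈ I, HasDerivAt (fun u => ⟪α u, B u⟫) 0 s := by
    intro s hs
    have h := (hα s hs).inner ℝ (hB s hs)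
    rw [show ⟪α s, (-τ s) • N s⟫ + ⟪T s, B s⟫ = 0 by
      rw [real_inner_smul_right, hrect s hs, hTB s hs]; ring] at h
    exact h
  set c : ℝ := ⟪α s0, B s0⟫ with hc
  have hgc : ∀ s ∈ I, ⟪α s, B s⟫ = c :=
    fun s hs => const_of_hasDerivAt_zero hIo hIc hgd hs hs0
  -- ⟪α, T⟫ - s is constant
  have hfd : ∀ s ∈ I, HasDerivAt (fun u => ⟪α u, T u⟫ - u) 0 s := by
    intro s hs
    have h1 := ((hα s hs).inner ℝ (hT s hs)).sub (hasDerivAt_id s)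
    rw [show ⟪α s, κ s • N s⟫ + ⟪T s, T s⟫ - 1 = 0 by
      rw [real_inner_smul_right, hrect s hs, hTT s hs]; ring] at h1
    exact h1
  set d : ℝ := ⟪α s0, T s0⟫ - s0 with hd
  have hfc : ∀ s ∈ I, ⟪α s, T s⟫ = s + d := by
    intro s hs
    have := const_of_hasDerivAt_zero hIo hIc hfd hs hs0
    linarith [this]
  -- the main identity
  have main : ∀ s ∈ I, α s = (s + d) • T s + c • B s := by
    intro s hs
    have hv : α s - ((s + d) • T s + c • B s) = 0 := by
      apply eq_zero_of_orthonormal3 (hTT s hs) (hNN s hs) (hBB s hs) (hTN s hs)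
        (hTB s hs) (hNB s hs)
      · rw [inner_sub_left, inner_add_left, real_inner_smul_left, real_inner_smul_left,
          hfc s hs, hTT s hs, hBT s hs]; ring
      · rw [inner_sub_left, inner_add_left, real_inner_smul_left, real_inner_smul_left,
          hrect s hs, hBN s hs, hTN s hs]; ring
      · rw [inner_sub_left, inner_add_left, real_inner_smul_left, real_inner_smul_left,
          hgc s hs, hBB s hs, hTB s hs]; ring
    have := sub_eq_zero.mp hv
    exact this
  -- c ≠ 0
  have hcne : c ≠ 0 := by
    intro hc0
    have hsd : ∀ s ∈ I, s = -d := by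
      intro s hs
      have heq : α =ᶠ[nhds s] fun u => (u + d) • T u := by
        filter_upwards [hIo.mem_nhds hs] with u hu
        rw [main u hu, hc0, zero_smul, add_zero]
      have hd2 : HasDerivAt (fun u => (u + d) • T u)
          ((s + d) • (κ s • N s) + (1:ℝ) • T s) s :=
        HasDerivAt.smul ((hasDerivAt_id s).add_const d) (hT s hs)
      have hd1 : HasDerivAt α ((s + d) • (κ s • N s) + (1:ℝ) • T s) s :=
        hd2.congr_of_eventuallyEq heq
      have huniq := (hα s hs).unique hd1
      have hz : ((s + d) * κ s) • N s = 0 := by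
        rw [one_smul] at huniq
        have h2 := right_eq_add.mp huniq
        rwa [smul_smul] at h2
      have hN0 : N s ≠ 0 := by
        intro h0
        have := hNu s hs
        rw [h0, norm_zero] at this
        norm_num at this
      have := (smul_eq_zero.mp hz).resolve_right hN0
      have hκs := (hκ s hs).ne'
      have : s + d = 0 := by
        rcases mul_eq_zero.mp this with h | h
        · exact h
        · exact absurd h hκs
      linarith
    obtain ⟨ε, hε, hball⟩ := Metric.isOpen_iff.mp hIo s0 hs0
    have h1 : s0 = -d := hsd s0 hs0
    have hmem : s0 + ε/2 ∈ Metric.ball s0 ε := by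
      rw [Metric.mem_ball, Real.dist_eq, show s0 + ε/2 - s0 = ε/2 by ring,
        abs_of_pos (by linarith)]
      linarith
    have h2 : s0 + ε/2 = -d := hsd _ (hball hmem)
    linarith
  refine ⟨1/c, d/c, one_div_ne_zero hcne, fun s hs => ?_⟩
  rw [main s hs]
  have e1 : d / c / (1 / c) = d := by field_simp
  have e2 : 1 / (1 / c) = c := one_div_one_div c
  rw [e1, e2]
end
end

section
/- If α : I → ℝ³ is a unit-speed rectifying curve with positive curvature, written α(s) = (s + b/a)·t(s) + (1/a)·b(s), then α(s) × α'(s) = (1/a)·n(s) for all s; in particular s ↦ α(s) × α'(s) has constant nonzero magnitude 1/|a|. -/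
open Real Set
open scoped RealInnerProductSpace

noncomputable section

/-- For a rectifying curve `α(s) = (s + b/a) • t(s) + (1/a) • b(s)` one has
`α × α' = (1/a) • n`, of constant nonzero magnitude `1/|a|`. -/
theorem rectifying_cross_eq (I : Set ℝ) (hIo : IsOpen I) (hIc : Convex ℝ I)
    (α T N B : ℝ → E3) (κ τ : ℝ → ℝ)
    (hα : ∀ s ∈ I, HasDerivAt α (T s) s)
    (hT : ∀ s ∈ I, HasDerivAt T (κ s • N s) s)
    (hN : ∀ s ∈ I, HasDerivAt N ((-κ s) • T s + τ s • B s) s)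
    (hB : ∀ s ∈ I, HasDerivAt B ((-τ s) • N s) s)
    (hTu : ∀ s ∈ I, ‖T s‖ = 1)
    (hNu : ∀ s ∈ I, ‖N s‖ = 1)
    (hBdef : ∀ s ∈ I, B s = cross3 (T s) (N s))
    (hκ : ∀ s ∈ I, 0 < κ s)
    (a b : ℝ) (ha : a ≠ 0)
    (hform : ∀ s ∈ I, α s = (s + b / a) • T s + (1 / a) • B s) :
    ∀ s ∈ I, cross3 (α s) (T s) = (1 / a) • N s ∧
      ‖cross3 (α s) (T s)‖ = 1 / |a| := by
  intro s hs
  -- orthogonality of T and N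
  have hd : HasDerivAt (fun t => ⟪T t, T t⟫) (⟪T s, κ s • N s⟫ + ⟪κ s • N s, T s⟫) s :=
    (hT s hs).inner ℝ (hT s hs)
  have hconst : HasDerivAt (fun t => ⟪T t, T t⟫) 0 s := by
    apply (hasDerivAt_const s (1:ℝ)).congr_of_eventuallyEq
    filter_upwards [hIo.mem_nhds hs] with t ht
    rw [real_inner_self_eq_norm_sq, hTu t ht]; norm_num
  have hzero : ⟪T s, κ s • N s⟫ + ⟪κ s • N s, T s⟫ = 0 := hd.unique hconst
  rw [real_inner_smul_right, real_inner_smul_left, real_inner_comm (N s) (T s)] at hzero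
  have hTN : ⟪T s, N s⟫ = 0 := by
    have hk := (hκ s hs).ne'
    have hx : κ s * ⟪N s, T s⟫ = 0 := by linarith
    have := (mul_eq_zero.mp hx).resolve_left hk
    rwa [real_inner_comm] at this
  have hTN' : T s 0 * N s 0 + T s 1 * N s 1 + T s 2 * N s 2 = 0 := by
    have h := hTN
    simp [PiLp.inner_apply, Fin.sum_univ_three] at h
    linarith
  have hTT : T s 0 * T s 0 + T s 1 * T s 1 + T s 2 * T s 2 = 1 := by
    have h := hTu s hs
    have h2 : ‖T s‖ ^ 2 = 1 := by rw [h]; norm_num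
    rw [EuclideanSpace.norm_eq, Real.sq_sqrt (by positivity)] at h2
    simpa [Fin.sum_univ_three, sq] using h2
  have heq : cross3 (α s) (T s) = (1 / a) • N s := by
    ext i
    have hα' := hform s hs
    have hB' := hBdef s hs
    fin_cases i <;>
      simp [cross3, e3, hα', hB']
    · linear_combination (1 / a) * N s 0 * hTT - (1 / a) * T s 0 * hTN'
    · linear_combination (1 / a) * N s 1 * hTT - (1 / a) * T s 1 * hTN'
    · linear_combination (1 / a) * N s 2 * hTT - (1 / a) * T s 2 * hTN'
  refine ⟨heq, ?_⟩
  rw [heq, norm_smul, hNu s hs, Real.norm_eq_abs, abs_div, abs_one, mul_one]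
end
end

section
/- Let α be a unit-speed curve with positive curvature lying on a general cone with vertex at the origin. If α is a geodesic of the cone, then the function δ(s) defined by α(s) × α'(s) = δ(s)·n(s) (which exists since the surface normal along a geodesic is parallel to the principal normal n) is constant and nonzero; consequently ‖α × α'‖ is a nonzero constant. -/
open Real Set
open scoped RealInnerProductSpace

noncomputable section

lemma proj_deriv {f : ℝ → E3} {f' : E3} {s : ℝ} (hf : HasDerivAt f f' s) (i : Fin 3) :
    HasDerivAt (fun t => f t i) (f' i) s := by
  have := (EuclideanSpace.proj i : E3 →L[ℝ] ℝ).hasFDerivAt.comp_hasDerivAt s hf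
  simpa [Function.comp_def] using this

lemma e3_deriv {x y z : ℝ → ℝ} {x' y' z' : ℝ} {s : ℝ}
    (hx : HasDerivAt x x' s) (hy : HasDerivAt y y' s) (hz : HasDerivAt z z' s) :
    HasDerivAt (fun t => e3 (x t) (y t) (z t)) (e3 x' y' z') s := by
  have h : HasDerivAt (fun t => ![x t, y t, z t]) ![x', y', z'] s := by
    rw [hasDerivAt_pi]
    intro i
    fin_cases i
    · simpa using hx
    · simpa using hy
    · simpa using hz
  have := ((PiLp.continuousLinearEquiv 2 ℝ (fun _ : Fin 3 => ℝ)).symm :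
      (Fin 3 → ℝ) →L[ℝ] E3).hasFDerivAt.comp_hasDerivAt s h
  simpa [e3, Function.comp_def] using this

lemma ext3 {a b : E3} (h0 : a 0 = b 0) (h1 : a 1 = b 1) (h2 : a 2 = b 2) : a = b := by
  ext i; fin_cases i <;> assumption

lemma cross_deriv {f g : ℝ → E3} {f' g' : E3} {s : ℝ}
    (hf : HasDerivAt f f' s) (hg : HasDerivAt g g' s) :
    HasDerivAt (fun t => cross3 (f t) (g t)) (cross3 f' (g s) + cross3 (f s) g') s := by
  have h := e3_deriv
    (((proj_deriv hf 1).mul (proj_deriv hg 2)).sub ((proj_deriv hf 2).mul (proj_deriv hg 1)))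
    (((proj_deriv hf 2).mul (proj_deriv hg 0)).sub ((proj_deriv hf 0).mul (proj_deriv hg 2)))
    (((proj_deriv hf 0).mul (proj_deriv hg 1)).sub ((proj_deriv hf 1).mul (proj_deriv hg 0)))
  convert h using 1
  · rfl
  apply ext3 <;> simp [cross3, e3, PiLp.add_apply] <;> ring

lemma inner3 (a b : E3) : ⟪a, b⟫ = a 0 * b 0 + a 1 * b 1 + a 2 * b 2 := by
  simp [PiLp.inner_apply, Fin.sum_univ_three]; ring

lemma crossE3_self (a : E3) : cross3 a a = 0 := by
  apply ext3 <;> simp [cross3, e3] <;> ring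

lemma crossE3_smul_right (c : ℝ) (a b : E3) : cross3 a (c • b) = c • cross3 a b := by
  apply ext3 <;> simp [cross3, e3, PiLp.smul_apply, smul_eq_mul] <;> ring

lemma crossE3_perp_right (a b : E3) : ⟪cross3 a b, b⟫ = 0 := by
  rw [inner3]; simp [cross3, e3]; ring

set_option maxHeartbeats 1000000 in
/-- Along a geodesic on a cone with vertex at the origin the surface normal is
parallel to the principal normal, so `α × α' = δ • n` for some function `δ`;
this `δ` is a nonzero constant, hence `‖α × α'‖` is a nonzero constant. -/
theorem geodesic_delta_const (I : Set ℝ) (hIo : IsOpen I) (hIc : Convex ℝ I)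
    (α T N B : ℝ → E3) (κ τ : ℝ → ℝ)
    (hα : ∀ s ∈ I, HasDerivAt α (T s) s)
    (hT : ∀ s ∈ I, HasDerivAt T (κ s • N s) s)
    (hN : ∀ s ∈ I, HasDerivAt N ((-κ s) • T s + τ s • B s) s)
    (hB : ∀ s ∈ I, HasDerivAt B ((-τ s) • N s) s)
    (hTu : ∀ s ∈ I, ‖T s‖ = 1)
    (hNu : ∀ s ∈ I, ‖N s‖ = 1)
    (hBdef : ∀ s ∈ I, B s = cross3 (T s) (N s))
    (hκ : ∀ s ∈ I, 0 < κ s)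
    (hne : I.Nonempty)
    (δ δd : ℝ → ℝ)
    (hδdiff : ∀ s ∈ I, HasDerivAt δ (δd s) s)
    (hδ : ∀ s ∈ I, cross3 (α s) (T s) = δ s • N s) :
    ∃ c : ℝ, c ≠ 0 ∧ ∀ s ∈ I, δ s = c ∧ ‖cross3 (α s) (T s)‖ = |c| := by
  obtain ⟨s₀, hs₀⟩ := hne
  -- inner products of the frame
  have hTT : ∀ s ∈ I, ⟪T s, T s⟫ = 1 := by
    intro s hs
    rw [real_inner_self_eq_norm_sq, hTu s hs]; norm_num
  have hNN : ∀ s ∈ I, ⟪N s, N s⟫ = 1 := by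
    intro s hs
    rw [real_inner_self_eq_norm_sq, hNu s hs]; norm_num
  have hTN : ∀ s ∈ I, ⟪T s, N s⟫ = 0 := by
    intro s hs
    have h1 : HasDerivAt (fun t => ⟪T t, T t⟫)
        (⟪T s, κ s • N s⟫ + ⟪κ s • N s, T s⟫) s := (hT s hs).inner ℝ (hT s hs)
    have h2 : (fun t => ⟪T t, T t⟫) =ᶠ[nhds s] fun _ => (1 : ℝ) :=
      Filter.eventually_of_mem (hIo.mem_nhds hs) (fun t ht => hTT t ht)
    have h3 : HasDerivAt (fun t => ⟪T t, T t⟫) 0 s :=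
      (hasDerivAt_const s (1 : ℝ)).congr_of_eventuallyEq h2
    have h4 := h1.unique h3
    rw [real_inner_smul_left, real_inner_smul_right, real_inner_comm (T s) (N s)] at h4
    have h5 : κ s * ⟪T s, N s⟫ = 0 := by linarith
    exact (mul_eq_zero.mp h5).resolve_left (hκ s hs).ne'
  -- derivative identity
  have key : ∀ s ∈ I, κ s • cross3 (α s) (N s)
      = δ s • ((-κ s) • T s + τ s • B s) + δd s • N s := by
    intro s hs
    have D1 := cross_deriv (hα s hs) (hT s hs)
    rw [crossE3_self, zero_add, crossE3_smul_right] at D1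
    have D2 := (hδdiff s hs).smul (hN s hs)
    have heq : (fun t => cross3 (α t) (T t)) =ᶠ[nhds s] fun t => δ t • N t :=
      Filter.eventually_of_mem (hIo.mem_nhds hs) (fun t ht => hδ t ht)
    have D2' : HasDerivAt (fun t => cross3 (α t) (T t))
        (δ s • ((-κ s) • T s + τ s • B s) + δd s • N s) s :=
      D2.congr_of_eventuallyEq heq
    exact D1.unique D2'
  -- δd vanishes on I
  have hδd0 : ∀ s ∈ I, δd s = 0 := by
    intro s hs
    have h := congrArg (fun v : E3 => (⟪v, N s⟫ : ℝ)) (key s hs)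
    simp only [inner_add_left, real_inner_smul_left] at h
    rw [crossE3_perp_right, hNN s hs, hTN s hs, hBdef s hs] at h
    have hBN : ⟪cross3 (T s) (N s), N s⟫ = 0 := crossE3_perp_right _ _
    rw [hBN] at h
    simpa using h.symm
  -- δ is constant on I
  have hconst : ∀ s ∈ I, δ s = δ s₀ := by
    intro s hs
    have hle := hIc.norm_image_sub_le_of_norm_hasDerivWithin_le
      (f := δ) (f' := δd) (C := 0)
      (fun x hx => (hδdiff x hx).hasDerivWithinAt)
      (fun x hx => by rw [hδd0 x hx]; simp) hs₀ hs
    have : ‖δ s - δ s₀‖ ≤ 0 := by simpa using hle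
    have := le_antisymm this (norm_nonneg _)
    have := norm_eq_zero.mp this
    linarith [sub_eq_zero.mp this]
  set c := δ s₀ with hc
  -- c is nonzero
  have hcne : c ≠ 0 := by
    intro hc0
    -- then α × T ≡ 0 and hence α × N ≡ 0
    have hcross0 : ∀ s ∈ I, cross3 (α s) (T s) = 0 := by
      intro s hs
      rw [hδ s hs, hconst s hs, hc0, zero_smul]
    have hcrossN0 : ∀ s ∈ I, cross3 (α s) (N s) = 0 := by
      intro s hs
      have hk := key s hs
      have hδd := hδd0 s hs
      have hδs : δ s = 0 := by rw [hconst s hs, hc0]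
      rw [hδd, hδs, zero_smul, zero_smul, zero_add] at hk
      have hκs := (hκ s hs).ne'
      rcases smul_eq_zero.mp hk with h | h
      · exact absurd h hκs
      · exact h
    -- α vanishes on I
    have hα0 : ∀ s ∈ I, α s = 0 := by
      intro s hs
      have hct := hcross0 s hs
      have hcn := hcrossN0 s hs
      have hc1 : α s 1 * T s 2 - α s 2 * T s 1 = 0 := by
        have : (cross3 (α s) (T s)) 0 = (0 : E3) 0 := by rw [hct]
        simpa [cross3, e3] using this
      have hc2 : α s 2 * T s 0 - α s 0 * T s 2 = 0 := by
        have : (cross3 (α s) (T s)) 1 = (0 : E3) 1 := by rw [hct]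
        simpa [cross3, e3] using this
      have hc3 : α s 0 * T s 1 - α s 1 * T s 0 = 0 := by
        have : (cross3 (α s) (T s)) 2 = (0 : E3) 2 := by rw [hct]
        simpa [cross3, e3] using this
      have hd1 : α s 1 * N s 2 - α s 2 * N s 1 = 0 := by
        have : (cross3 (α s) (N s)) 0 = (0 : E3) 0 := by rw [hcn]
        simpa [cross3, e3] using this
      have hd2 : α s 2 * N s 0 - α s 0 * N s 2 = 0 := by
        have : (cross3 (α s) (N s)) 1 = (0 : E3) 1 := by rw [hcn]
        simpa [cross3, e3] using this
      have hd3 : α s 0 * N s 1 - α s 1 * N s 0 = 0 := by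
        have : (cross3 (α s) (N s)) 2 = (0 : E3) 2 := by rw [hcn]
        simpa [cross3, e3] using this
      have htt : T s 0 * T s 0 + T s 1 * T s 1 + T s 2 * T s 2 = 1 := by
        have := hTT s hs; rwa [inner3] at this
      have hnn : N s 0 * N s 0 + N s 1 * N s 1 + N s 2 * N s 2 = 1 := by
        have := hNN s hs; rwa [inner3] at this
      have htn : T s 0 * N s 0 + T s 1 * N s 1 + T s 2 * N s 2 = 0 := by
        have := hTN s hs; rwa [inner3] at this
      set a0 := α s 0; set a1 := α s 1; set a2 := α s 2
      set t0 := T s 0; set t1 := T s 1; set t2 := T s 2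
      set n0 := N s 0; set n1 := N s 1; set n2 := N s 2
      set p := a0 ^ 2 + a1 ^ 2 + a2 ^ 2 with hp
      set x := a0 * t0 + a1 * t1 + a2 * t2 with hx
      set y := a0 * n0 + a1 * n1 + a2 * n2 with hy
      have l1 : p = x ^ 2 := by
        rw [hp, hx]
        linear_combination (-(a0 ^ 2 + a1 ^ 2 + a2 ^ 2)) * htt
          + (a1 * t2 - a2 * t1) * hc1 + (a2 * t0 - a0 * t2) * hc2
          + (a0 * t1 - a1 * t0) * hc3
      have l2 : p = y ^ 2 := by
        rw [hp, hy]
        linear_combination (-(a0 ^ 2 + a1 ^ 2 + a2 ^ 2)) * hnn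
          + (a1 * n2 - a2 * n1) * hd1 + (a2 * n0 - a0 * n2) * hd2
          + (a0 * n1 - a1 * n0) * hd3
      have l3 : x * y = 0 := by
        rw [hx, hy]
        linear_combination (a0 ^ 2 + a1 ^ 2 + a2 ^ 2) * htn
          - (a1 * n2 - a2 * n1) * hc1 - (a2 * n0 - a0 * n2) * hc2
          - (a0 * n1 - a1 * n0) * hc3
      have hp2 : p * p = 0 := by
        linear_combination y ^ 2 * l1 + p * l2 + (x * y) * l3
      have hp0 : a0 ^ 2 + a1 ^ 2 + a2 ^ 2 = 0 := by
        rw [← hp]; exact mul_self_eq_zero.mp hp2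
      have ha0 : a0 = 0 := by
        have h : a0 ^ 2 = 0 := by nlinarith [sq_nonneg a1, sq_nonneg a2]
        exact pow_eq_zero_iff (two_ne_zero) |>.mp h
      have ha1 : a1 = 0 := by
        have h : a1 ^ 2 = 0 := by nlinarith [sq_nonneg a0, sq_nonneg a2]
        exact pow_eq_zero_iff (two_ne_zero) |>.mp h
      have ha2 : a2 = 0 := by
        have h : a2 ^ 2 = 0 := by nlinarith [sq_nonneg a0, sq_nonneg a1]
        exact pow_eq_zero_iff (two_ne_zero) |>.mp h
      exact ext3 (by simpa using ha0) (by simpa using ha1) (by simpa using ha2)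
    -- contradiction: T s₀ would be zero
    have hev : α =ᶠ[nhds s₀] fun _ => (0 : E3) :=
      Filter.eventually_of_mem (hIo.mem_nhds hs₀) (fun t ht => hα0 t ht)
    have hαd : HasDerivAt α 0 s₀ :=
      (hasDerivAt_const s₀ (0 : E3)).congr_of_eventuallyEq hev
    have hT0 : T s₀ = 0 := (hα s₀ hs₀).unique hαd
    have := hTu s₀ hs₀
    rw [hT0] at this
    simp at this
  refine ⟨c, hcne, fun s hs => ⟨hconst s hs, ?_⟩⟩
  rw [hδ s hs, hconst s hs, norm_smul, hNu s hs]
  simp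
end
end

section
/- Let α(s) = (1/a)·√(1 + (as + b)²) · y(c + arctan(as + b)) with a > 0 and y a unit-speed curve on the unit sphere. Then α is unit speed, has positive curvature at points where defined, and satisfies α(s) × α'(s) = (1/a)·(y × y')(t(s)); consequently the principal normal n of α is parallel to the surface normal N of the cone X(t,u) = u·y(t) along α, i.e., α is a geodesic of the cone. -/
open Real Set
open scoped RealInnerProductSpace

noncomputable section

lemma cross3_triple (u v w : E3) : cross3 u (cross3 v w) = ⟪u,w⟫ • v - ⟪u,v⟫ • w := by
  ext i
  fin_cases i <;>
  · simp [cross3, e3, PiLp.inner_apply, RCLike.inner_apply, Fin.sum_univ_three,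
      PiLp.smul_apply, PiLp.sub_apply, smul_eq_mul]
    ring

lemma cross3_comm (u v : E3) : cross3 u v = - cross3 v u := by
  ext i
  fin_cases i <;>
  · simp [cross3, e3, PiLp.neg_apply]
    ring

lemma cross3_zero (u : E3) : cross3 u 0 = 0 := by
  ext i
  fin_cases i <;> simp [cross3, e3]

lemma inner_cross3_self (u v : E3) : ⟪cross3 u v, cross3 u v⟫ = ⟪u,u⟫*⟪v,v⟫ - ⟪u,v⟫^2 := by
  simp only [PiLp.inner_apply]
  simp [cross3, e3, PiLp.inner_apply, RCLike.inner_apply, Fin.sum_univ_three]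
  ring

lemma cross3_smul_combo (f g h : ℝ) (u v : E3) :
    cross3 (f • u) (g • u + h • v) = (f*h) • cross3 u v := by
  ext i
  fin_cases i <;>
  · simp [cross3, e3, PiLp.smul_apply, PiLp.add_apply, smul_eq_mul]
    ring

lemma ortho_span (u v x : E3) (hu : ⟪u,u⟫ = 1) (hv : ⟪v,v⟫ = 1) (huv : ⟪u,v⟫ = 0)
    (hxu : ⟪x,u⟫ = 0) (hxv : ⟪x,v⟫ = 0) :
    x = ⟪cross3 v u, x⟫ • cross3 v u := by
  set n := cross3 v u with hn
  have h1 : cross3 x n = 0 := by rw [hn, cross3_triple, hxu, hxv]; simp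
  have h2 : cross3 n x = 0 := by rw [cross3_comm, h1, neg_zero]
  have h3 : cross3 n (cross3 n x) = ⟪n,x⟫ • n - ⟪n,n⟫ • x := cross3_triple n n x
  have huv' : ⟪v,u⟫ = (0:ℝ) := by rw [real_inner_comm]; exact huv
  have hnn : ⟪n,n⟫ = 1 := by
    rw [hn, inner_cross3_self, hv, hu, huv']; ring
  rw [h2, cross3_zero, hnn, one_smul] at h3
  exact (sub_eq_zero.mp h3.symm).symm

/-- The curve `α(s) = (1/a)√(1+(as+b)²) • y(c + arctan(as+b))` over a unit-speed
spherical curve `y` (spanning a nondegenerate cone, i.e. `y'' + y ≠ 0`) is unit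
speed, has nonvanishing curvature, satisfies `α × α' = (1/a) • (y × y')`, and its
principal normal `α''/‖α''‖` is parallel to the surface normal `y' × y` of the
cone `X(t,u) = u • y(t)`: it is a geodesic of the cone. -/
theorem cone_rectifying_is_geodesic (I : Set ℝ) (hIo : IsOpen I) (hIc : Convex ℝ I)
    (y yd ydd : ℝ → E3)
    (hy : ∀ τ : ℝ, HasDerivAt y (yd τ) τ)
    (hyd : ∀ τ : ℝ, HasDerivAt yd (ydd τ) τ)
    (hyu : ∀ τ : ℝ, ‖y τ‖ = 1) (hydu : ∀ τ : ℝ, ‖yd τ‖ = 1)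
    (hng : ∀ τ : ℝ, ydd τ + y τ ≠ 0)
    (a b c : ℝ) (ha : 0 < a)
    (α : ℝ → E3)
    (hα : ∀ s : ℝ, α s = ((1 / a) * Real.sqrt (1 + (a * s + b) ^ 2)) •
      y (c + Real.arctan (a * s + b))) :
    ∀ s ∈ I,
      ‖deriv α s‖ = 1 ∧
      cross3 (α s) (deriv α s)
        = (1 / a) • cross3 (y (c + Real.arctan (a * s + b))) (yd (c + Real.arctan (a * s + b))) ∧
      deriv (deriv α) s ≠ 0 ∧
      ∃ k : ℝ, k ≠ 0 ∧ deriv (deriv α) s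
        = k • cross3 (yd (c + Real.arctan (a * s + b))) (y (c + Real.arctan (a * s + b))) := by
  -- inner product identities for orthonormal frame
  have hyy : ∀ τ : ℝ, ⟪y τ, y τ⟫ = (1:ℝ) := fun τ => by
    rw [real_inner_self_eq_norm_sq, hyu τ]; norm_num
  have hdd : ∀ τ : ℝ, ⟪yd τ, yd τ⟫ = (1:ℝ) := fun τ => by
    rw [real_inner_self_eq_norm_sq, hydu τ]; norm_num
  have hyyd : ∀ τ : ℝ, ⟪y τ, yd τ⟫ = (0:ℝ) := by
    intro τ
    have h1 : HasDerivAt (fun τ => (⟪y τ, y τ⟫ : ℝ)) (⟪y τ, yd τ⟫ + ⟪yd τ, y τ⟫) τ :=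
      (hy τ).inner ℝ (hy τ)
    have h2 : HasDerivAt (fun τ => (⟪y τ, y τ⟫ : ℝ)) 0 τ := by
      have he : (fun τ => (⟪y τ, y τ⟫ : ℝ)) = fun _ => (1:ℝ) := funext hyy
      rw [he]; exact hasDerivAt_const _ _
    have h3 := h1.unique h2
    have h4 := real_inner_comm (y τ) (yd τ)
    linarith
  have hddd : ∀ τ : ℝ, ⟪yd τ, ydd τ⟫ = (0:ℝ) := by
    intro τ
    have h1 : HasDerivAt (fun τ => (⟪yd τ, yd τ⟫ : ℝ)) (⟪yd τ, ydd τ⟫ + ⟪ydd τ, yd τ⟫) τ :=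
      (hyd τ).inner ℝ (hyd τ)
    have h2 : HasDerivAt (fun τ => (⟪yd τ, yd τ⟫ : ℝ)) 0 τ := by
      have he : (fun τ => (⟪yd τ, yd τ⟫ : ℝ)) = fun _ => (1:ℝ) := funext hdd
      rw [he]; exact hasDerivAt_const _ _
    have h3 := h1.unique h2
    have h4 := real_inner_comm (yd τ) (ydd τ)
    linarith
  have hyddy : ∀ τ : ℝ, ⟪y τ, ydd τ⟫ = (-1:ℝ) := by
    intro τ
    have h1 : HasDerivAt (fun τ => (⟪y τ, yd τ⟫ : ℝ)) (⟪y τ, ydd τ⟫ + ⟪yd τ, yd τ⟫) τ :=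
      (hy τ).inner ℝ (hyd τ)
    have h2 : HasDerivAt (fun τ => (⟪y τ, yd τ⟫ : ℝ)) 0 τ := by
      have he : (fun τ => (⟪y τ, yd τ⟫ : ℝ)) = fun _ => (0:ℝ) := funext hyyd
      rw [he]; exact hasDerivAt_const _ _
    have h3 := h1.unique h2
    have h4 := hdd τ
    linarith
  -- calculus setup
  have hq : ∀ s : ℝ, (0:ℝ) < 1 + (a*s+b)^2 := fun s => by positivity
  set r : ℝ → ℝ := fun s => Real.sqrt (1 + (a*s+b)^2) with hrdef
  have hrpos : ∀ s, 0 < r s := fun s => Real.sqrt_pos.2 (hq s)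
  have hr2 : ∀ s, r s ^ 2 = 1 + (a*s+b)^2 := fun s => Real.sq_sqrt (hq s).le
  set t : ℝ → ℝ := fun s => c + Real.arctan (a*s+b) with htdef
  have hw : ∀ s : ℝ, HasDerivAt (fun s => a*s+b) a s := fun s => by
    simpa using ((hasDerivAt_id s).const_mul a).add_const b
  have htd : ∀ s : ℝ, HasDerivAt t (a / (1 + (a*s+b)^2)) s := fun s => by
    have h := ((Real.hasDerivAt_arctan (a*s+b)).comp s (hw s)).const_add c
    refine h.congr_deriv (Eq.symm ?_)
    ring
  have hrd : ∀ s : ℝ, HasDerivAt r (a*(a*s+b)/ r s) s := fun s => by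
    have h1 : HasDerivAt (fun s : ℝ => 1 + (a*s+b)^2) (2*(a*s+b)*a) s := by
      have := ((hw s).pow 2).const_add 1
      simpa using this
    have h2 := (Real.hasDerivAt_sqrt (hq s).ne').comp s h1
    refine h2.congr_deriv (Eq.symm ?_)
    have : Real.sqrt (1 + (a*s+b)^2) = r s := rfl
    rw [this]
    field_simp [(hrpos s).ne']
  have hyt : ∀ s : ℝ, HasDerivAt (fun s => y (t s)) ((a/(1+(a*s+b)^2)) • yd (t s)) s :=
    fun s => (hy (t s)).scomp s (htd s)
  have hydt : ∀ s : ℝ, HasDerivAt (fun s => yd (t s)) ((a/(1+(a*s+b)^2)) • ydd (t s)) s :=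
    fun s => (hyd (t s)).scomp s (htd s)
  have hαfun : α = fun s => ((1/a) * r s) • y (t s) := funext fun s => hα s
  have hD1 : ∀ s : ℝ, HasDerivAt α (((a*s+b)/r s) • y (t s) + (1/r s) • yd (t s)) s := by
    intro s
    rw [hαfun]
    have H := ((hrd s).const_mul (1/a)).smul (hyt s)
    refine H.congr_deriv (Eq.symm ?_)
    rw [← hr2 s]
    match_scalars
    · field_simp [ha.ne']; try tauto
    · field_simp [ha.ne', (hrpos s).ne']; try ring
  have hderiv1 : deriv α = fun s : ℝ => ((a*s+b)/r s) • y (t s) + (1/r s) • yd (t s) :=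
    funext fun s => (hD1 s).deriv
  have hD2 : ∀ s : ℝ, HasDerivAt (fun s : ℝ => ((a*s+b)/r s) • y (t s) + (1/r s) • yd (t s))
      ((a / r s ^ 3) • (ydd (t s) + y (t s))) s := by
    intro s
    have h1 : HasDerivAt (fun s : ℝ => (a*s+b)/r s)
        ((a * r s - (a*s+b)*(a*(a*s+b)/r s))/ (r s)^2) s :=
      (hw s).div (hrd s) (hrpos s).ne'
    have h2 : HasDerivAt (fun s : ℝ => 1/r s)
        ((0 * r s - 1*(a*(a*s+b)/r s))/(r s)^2) s :=
      (hasDerivAt_const s (1:ℝ)).div (hrd s) (hrpos s).ne'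
    have H := (h1.smul (hyt s)).add (h2.smul (hydt s))
    refine H.congr_deriv (Eq.symm ?_)
    rw [← hr2 s]
    match_scalars
    · field_simp [(hrpos s).ne']; try ring; try tauto
    · field_simp [(hrpos s).ne']
      linear_combination (-1) * hr2 s
    · field_simp [(hrpos s).ne']; try ring; try tauto
  have hderiv2 : ∀ s : ℝ, deriv (deriv α) s = (a / r s ^ 3) • (ydd (t s) + y (t s)) := by
    intro s
    rw [hderiv1]
    exact (hD2 s).deriv
  intro s _hs
  have hrne : r s ≠ 0 := (hrpos s).ne'
  have hfold1 : Real.sqrt (1+(a*s+b)^2) = r s := rfl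
  have hfold2 : c + Real.arctan (a*s+b) = t s := rfl
  have hd1 : deriv α s = ((a*s+b)/r s) • y (t s) + (1/r s) • yd (t s) := by
    rw [hderiv1]
  refine ⟨?_, ?_, ?_, ?_⟩
  · -- unit speed
    have h1 : ⟪deriv α s, deriv α s⟫ = (1:ℝ) := by
      rw [hd1]
      have hc : ⟪yd (t s), y (t s)⟫ = (0:ℝ) := by rw [real_inner_comm]; exact hyyd _
      rw [inner_add_left, inner_add_right, inner_add_right,
        real_inner_smul_left, real_inner_smul_left, real_inner_smul_left, real_inner_smul_left,
        real_inner_smul_right, real_inner_smul_right, real_inner_smul_right, real_inner_smul_right,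
        hyy, hyyd, hdd, hc]
      field_simp
      linarith [hr2 s]
    have h2 : ‖deriv α s‖^2 = 1 := by rw [← real_inner_self_eq_norm_sq]; exact h1
    have h3 : (‖deriv α s‖ - 1) * (‖deriv α s‖ + 1) = 0 := by nlinarith
    rcases mul_eq_zero.mp h3 with h | h
    · linarith
    · linarith [norm_nonneg (deriv α s)]
  · -- cross product identity
    rw [hα s, hd1, hfold1, hfold2, cross3_smul_combo]
    congr 1
    field_simp
  · -- nonvanishing curvature
    rw [hderiv2 s]
    exact smul_ne_zero (ne_of_gt (div_pos ha (pow_pos (hrpos s) 3))) (hng (t s))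
  · -- principal normal parallel to cone normal
    have e1 : ⟪ydd (t s), y (t s)⟫ = (-1:ℝ) := by rw [real_inner_comm]; exact hyddy _
    have e2 : ⟪ydd (t s), yd (t s)⟫ = (0:ℝ) := by rw [real_inner_comm]; exact hddd _
    have hxu : ⟪ydd (t s) + y (t s), y (t s)⟫ = (0:ℝ) := by
      rw [inner_add_left, e1, hyy]; ring
    have hxv : ⟪ydd (t s) + y (t s), yd (t s)⟫ = (0:ℝ) := by
      rw [inner_add_left, e2, hyyd]; ring
    have hx := ortho_span (y (t s)) (yd (t s)) (ydd (t s) + y (t s))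
      (hyy _) (hdd _) (hyyd _) hxu hxv
    set μ : ℝ := ⟪cross3 (yd (t s)) (y (t s)), ydd (t s) + y (t s)⟫ with hμdef
    have hμne : μ ≠ 0 := by
      intro h0
      exact hng (t s) (by rw [hx, h0, zero_smul])
    refine ⟨(a / r s ^ 3) * μ, mul_ne_zero (ne_of_gt (div_pos ha (pow_pos (hrpos s) 3))) hμne, ?_⟩
    rw [hfold2, hderiv2 s, hx, smul_smul]
end
end

section
/- If α is a geodesic with positive curvature on a cone with vertex at the origin, then α is not a planar curve (its torsion is not identically zero). -/
open Real Set
open scoped RealInnerProductSpace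

noncomputable section

lemma inner_cross3_self_s12 (v w : E3) : ⟪w, cross3 v w⟫ = 0 := by
  simp [cross3, e3, PiLp.inner_apply, Fin.sum_univ_three, WithLp.equiv_symm_apply, PiLp.toLp_apply]
  ring

lemma deriv_zero_of_const_on {f : ℝ → ℝ} {I : Set ℝ} (hI : IsOpen I) {s : ℝ} (hs : s ∈ I)
    {c d : ℝ} (hc : ∀ x ∈ I, f x = c) (hd : HasDerivAt f d s) : d = 0 := by
  have h1 : HasDerivAt f 0 s := by
    apply (hasDerivAt_const s c).congr_of_eventuallyEq
    filter_upwards [hI.mem_nhds hs] with x hx using hc x hx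
  exact hd.unique h1

/-- A geodesic with positive curvature on a cone with vertex at the origin is not
planar: its torsion is not identically zero. -/
theorem cone_geodesic_not_planar (I : Set ℝ) (hIo : IsOpen I) (hIc : Convex ℝ I)
    (α T N B : ℝ → E3) (κ τ : ℝ → ℝ)
    (hα : ∀ s ∈ I, HasDerivAt α (T s) s)
    (hT : ∀ s ∈ I, HasDerivAt T (κ s • N s) s)
    (hN : ∀ s ∈ I, HasDerivAt N ((-κ s) • T s + τ s • B s) s)
    (hB : ∀ s ∈ I, HasDerivAt B ((-τ s) • N s) s)
    (hTu : ∀ s ∈ I, ‖T s‖ = 1)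
    (hNu : ∀ s ∈ I, ‖N s‖ = 1)
    (hBdef : ∀ s ∈ I, B s = cross3 (T s) (N s))
    (hκ : ∀ s ∈ I, 0 < κ s)
    (hne : I.Nonempty)
    (hgeo : (∃ (y : ℝ → E3) (u t : ℝ → ℝ), ∀ s ∈ I,
        ‖y (t s)‖ = 1 ∧
        HasDerivAt y (deriv y (t s)) (t s) ∧
        ‖deriv y (t s)‖ = 1 ∧
        0 < u s ∧
        α s = u s • y (t s) ∧
        (N s = cross3 (deriv y (t s)) (y (t s)) ∨
         N s = -cross3 (deriv y (t s)) (y (t s))))) :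
    ¬ (∀ s ∈ I, τ s = 0) := by
  intro hτ
  obtain ⟨y, u, t, hg⟩ := hgeo
  obtain ⟨s0, hs0⟩ := hne
  -- the normal is perpendicular to the position vector
  have hαN : ∀ s ∈ I, ⟪α s, N s⟫ = 0 := by
    intro s hs
    obtain ⟨_, _, _, hu, hαs, hNs⟩ := hg s hs
    have hic := inner_cross3_self_s12 (deriv y (t s)) (y (t s))
    rcases hNs with h | h
    · rw [hαs, h, real_inner_smul_left, hic, mul_zero]
    · rw [hαs, h, inner_neg_right, real_inner_smul_left, hic, mul_zero, neg_zero]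
  -- T ⊥ N
  have hTN : ∀ s ∈ I, ⟪T s, N s⟫ = 0 := by
    intro s hs
    have hd := (hT s hs).inner ℝ (hT s hs)
    have h0 : ⟪T s, κ s • N s⟫ + ⟪κ s • N s, T s⟫ = 0 :=
      deriv_zero_of_const_on hIo hs (c := 1)
        (fun x hx => by
          rw [real_inner_self_eq_norm_sq, hTu x hx]; norm_num) hd
    rw [real_inner_smul_right, real_inner_smul_left, real_inner_comm (N s)] at h0
    have hκs := hκ s hs
    rw [real_inner_comm]
    nlinarith [h0]
  -- ⟪α, T⟫ = 0 on I (using τ ≡ 0)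
  have hαT : ∀ s ∈ I, ⟪α s, T s⟫ = 0 := by
    intro s hs
    have hd := (hα s hs).inner ℝ (hN s hs)
    have h0 : ⟪α s, (-κ s) • T s + τ s • B s⟫ + ⟪T s, N s⟫ = 0 :=
      deriv_zero_of_const_on hIo hs (c := 0) hαN hd
    rw [hTN s hs, hτ s hs, inner_add_right, real_inner_smul_right,
      real_inner_smul_right] at h0
    have hκs := hκ s hs
    nlinarith [h0]
  -- but the derivative of ⟪α, T⟫ is 1
  have hd := (hα s0 hs0).inner ℝ (hT s0 hs0)
  have h0 : ⟪α s0, κ s0 • N s0⟫ + ⟪T s0, T s0⟫ = 0 :=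
    deriv_zero_of_const_on hIo hs0 (c := 0) hαT hd
  rw [real_inner_smul_right, hαN s0 hs0, real_inner_self_eq_norm_sq, hTu s0 hs0] at h0
  norm_num at h0
end
end

section
/- Let α be a unit-speed rectifying curve with κ > 0, written α(s) = (1/a)√(1+(as+b)²)·y(t(s)) with y the unit-speed spherical projection. For any fixed unit vector U, the identity ((1+(as+b)²)^{3/2}/a) · d/ds⟨y(t(s)), U⟩ = -(1/κ(s)) · d/ds⟨n(s), U⟩ holds. Consequently, ⟨y(t(s)), U⟩ is constant if and only if ⟨n(s), U⟩ is constant. -/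
open Real Set
open scoped RealInnerProductSpace

noncomputable section

lemma const_of_hasDerivAt_zero_s13 {I : Set ℝ} (hIo : IsOpen I) (hIc : Convex ℝ I)
    {f : ℝ → ℝ} (hf : ∀ s ∈ I, HasDerivAt f 0 s) :
    ∃ k : ℝ, ∀ s ∈ I, f s = k := by
  rcases I.eq_empty_or_nonempty with h | ⟨s₀, hs₀⟩
  · exact ⟨0, by simp [h]⟩
  · refine ⟨f s₀, fun s hs => ?_⟩
    refine hIc.is_const_of_fderivWithin_eq_zero
      (fun x hx => ((hf x hx).differentiableAt).differentiableWithinAt)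
      (fun x hx => ?_) hs hs₀
    rw [fderivWithin_of_isOpen hIo hx, (hf x hx).hasFDerivAt.fderiv]
    ext y
    simp

lemma scalar_identity (a s b tU bU ρ : ℝ) (ha : a ≠ 0) (hρ : 0 < ρ)
    (hρ2 : ρ ^ 2 = 1 + (a * s + b) ^ 2) :
    a / ρ ^ 3 * (tU - (a * s + b) * bU)
      = (0 * ρ - a * ((2 : ℕ) * (a * s + b) ^ 1 * (a * 1) / (2 * ρ))) / ρ ^ 2
          * ((s + b / a) * tU + 1 / a * bU) + a / ρ * tU := by
  field_simp
  linear_combination (-2 * a ^ 2 * tU) * hρ2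

/-- For a rectifying curve `α = (s + b/a) t + (1/a) b` with spherical projection
`y(t(s)) = a α(s)/√(1+(as+b)²)` and any fixed unit vector `U`,
`((1+(as+b)²)^{3/2}/a) (d/ds)⟨y, U⟩ = -(1/κ) (d/ds)⟨n, U⟩`; hence `⟨y, U⟩` is
constant iff `⟨n, U⟩` is constant. -/
theorem projection_normal_angle_relation (I : Set ℝ) (hIo : IsOpen I) (hIc : Convex ℝ I)
    (α T N B : ℝ → E3) (κ τ : ℝ → ℝ)
    (hα : ∀ s ∈ I, HasDerivAt α (T s) s)
    (hT : ∀ s ∈ I, HasDerivAt T (κ s • N s) s)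
    (hN : ∀ s ∈ I, HasDerivAt N ((-κ s) • T s + τ s • B s) s)
    (hB : ∀ s ∈ I, HasDerivAt B ((-τ s) • N s) s)
    (hTu : ∀ s ∈ I, ‖T s‖ = 1)
    (hNu : ∀ s ∈ I, ‖N s‖ = 1)
    (hBdef : ∀ s ∈ I, B s = cross3 (T s) (N s))
    (hκ : ∀ s ∈ I, 0 < κ s)
    (a b : ℝ) (ha : 0 < a)
    (hform : ∀ s ∈ I, α s = (s + b / a) • T s + (1 / a) • B s)
    (hτ : ∀ s ∈ I, τ s = κ s * (a * s + b))
    (U : E3) (hU : ‖U‖ = 1) :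
    (∀ s ∈ I,
      ((1 + (a * s + b) ^ 2) ^ ((3 : ℝ) / 2) / a) *
          deriv (fun σ : ℝ => ⟪(a / Real.sqrt (1 + (a * σ + b) ^ 2)) • α σ, U⟫) s
        = -(1 / κ s) * deriv (fun σ : ℝ => ⟪N σ, U⟫) s) ∧
    ((∃ k : ℝ, ∀ s ∈ I, ⟪(a / Real.sqrt (1 + (a * s + b) ^ 2)) • α s, U⟫ = k) ↔
     (∃ k : ℝ, ∀ s ∈ I, ⟪N s, U⟫ = k)) := by
  -- derivative of the projected inner product
  have keyF : ∀ s ∈ I,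
      HasDerivAt (fun σ : ℝ => ⟪(a / Real.sqrt (1 + (a * σ + b) ^ 2)) • α σ, U⟫)
        ((a / (Real.sqrt (1 + (a * s + b) ^ 2)) ^ 3)
          * (⟪T s, U⟫ - (a * s + b) * ⟪B s, U⟫)) s := by
    intro s hs
    have hx : (0:ℝ) < 1 + (a * s + b) ^ 2 := by positivity
    have hρ : (0:ℝ) < Real.sqrt (1 + (a * s + b) ^ 2) := Real.sqrt_pos.2 hx
    set ρ := Real.sqrt (1 + (a * s + b) ^ 2) with hρdef
    have hρ2 : ρ ^ 2 = 1 + (a * s + b) ^ 2 := Real.sq_sqrt hx.le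
    have h1 : HasDerivAt (fun σ : ℝ => 1 + (a * σ + b) ^ 2)
        ((2 : ℕ) * (a * s + b) ^ 1 * (a * 1)) s :=
      ((((hasDerivAt_id s).const_mul a).add_const b).pow 2).const_add 1
    have h2 : HasDerivAt (fun σ : ℝ => Real.sqrt (1 + (a * σ + b) ^ 2))
        (((2 : ℕ) * (a * s + b) ^ 1 * (a * 1)) / (2 * ρ)) s := h1.sqrt hx.ne'
    have h3 : HasDerivAt (fun σ : ℝ => a / Real.sqrt (1 + (a * σ + b) ^ 2))
        ((0 * ρ - a * (((2 : ℕ) * (a * s + b) ^ 1 * (a * 1)) / (2 * ρ))) / ρ ^ 2) s :=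
      (hasDerivAt_const s a).div h2 hρ.ne'
    have h4 : HasDerivAt (fun σ : ℝ => ⟪α σ, U⟫) (⟪α s, (0:E3)⟫ + ⟪T s, U⟫) s :=
      (hα s hs).inner ℝ (hasDerivAt_const s U)
    have h5 := h3.mul h4
    have heq : (fun σ : ℝ => ⟪(a / Real.sqrt (1 + (a * σ + b) ^ 2)) • α σ, U⟫)
        = fun σ : ℝ => (a / Real.sqrt (1 + (a * σ + b) ^ 2)) * ⟪α σ, U⟫ :=
      funext fun σ => real_inner_smul_left _ _ _
    rw [heq]
    have hαU : ⟪α s, U⟫ = (s + b / a) * ⟪T s, U⟫ + (1 / a) * ⟪B s, U⟫ := by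
      rw [hform s hs, inner_add_left, real_inner_smul_left, real_inner_smul_left]
    refine HasDerivAt.congr_deriv h5 ?_
    symm
    rw [← hρdef]
    simp only [inner_zero_right, zero_add, hαU]
    exact scalar_identity a s b ⟪T s, U⟫ ⟪B s, U⟫ ρ ha.ne' hρ hρ2
  -- derivative of ⟪N, U⟫
  have keyN : ∀ s ∈ I,
      HasDerivAt (fun σ : ℝ => ⟪N σ, U⟫)
        (κ s * ((a * s + b) * ⟪B s, U⟫ - ⟪T s, U⟫)) s := by
    intro s hs
    have h4 : HasDerivAt (fun σ : ℝ => ⟪N σ, U⟫)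
        (⟪N s, (0:E3)⟫ + ⟪(-κ s) • T s + τ s • B s, U⟫) s :=
      (hN s hs).inner ℝ (hasDerivAt_const s U)
    convert h4 using 1
    simp only [inner_zero_right, zero_add, inner_add_left, real_inner_smul_left, hτ s hs]
    ring
  have hrpow : ∀ s : ℝ,
      (1 + (a * s + b) ^ 2) ^ ((3 : ℝ) / 2) = (Real.sqrt (1 + (a * s + b) ^ 2)) ^ 3 := by
    intro s
    have hx : (0:ℝ) ≤ 1 + (a * s + b) ^ 2 := by positivity
    rw [Real.sqrt_eq_rpow, ← Real.rpow_natCast ((1 + (a * s + b) ^ 2) ^ ((1:ℝ)/2)) 3,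
      ← Real.rpow_mul hx]
    norm_num
  have main : ∀ s ∈ I,
      ((1 + (a * s + b) ^ 2) ^ ((3 : ℝ) / 2) / a) *
          deriv (fun σ : ℝ => ⟪(a / Real.sqrt (1 + (a * σ + b) ^ 2)) • α σ, U⟫) s
        = -(1 / κ s) * deriv (fun σ : ℝ => ⟪N σ, U⟫) s := by
    intro s hs
    rw [(keyF s hs).deriv, (keyN s hs).deriv, hrpow s]
    have hρ : (0:ℝ) < Real.sqrt (1 + (a * s + b) ^ 2) :=
      Real.sqrt_pos.2 (by positivity)
    have hκs := (hκ s hs).ne'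
    field_simp
    ring
  refine ⟨main, ?_⟩
  constructor
  · rintro ⟨k, hk⟩
    refine const_of_hasDerivAt_zero_s13 hIo hIc (fun s hs => ?_)
    have hF0 : HasDerivAt (fun σ : ℝ => ⟪(a / Real.sqrt (1 + (a * σ + b) ^ 2)) • α σ, U⟫)
        0 s := by
      refine (hasDerivAt_const s k).congr_of_eventuallyEq ?_
      filter_upwards [hIo.mem_nhds hs] with x hx using hk x hx
    have h0 := hF0.unique (keyF s hs)
    have hρ : (0:ℝ) < Real.sqrt (1 + (a * s + b) ^ 2) :=
      Real.sqrt_pos.2 (by positivity)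
    have hcoef : a / (Real.sqrt (1 + (a * s + b) ^ 2)) ^ 3 ≠ 0 := by positivity
    have hz : ⟪T s, U⟫ - (a * s + b) * ⟪B s, U⟫ = 0 := by
      rcases mul_eq_zero.1 h0.symm with h | h
      · exact absurd h hcoef
      · exact h
    have : κ s * ((a * s + b) * ⟪B s, U⟫ - ⟪T s, U⟫) = 0 := by
      rw [show (a * s + b) * ⟪B s, U⟫ - ⟪T s, U⟫
          = -(⟪T s, U⟫ - (a * s + b) * ⟪B s, U⟫) by ring, hz]
      ring
    exact this ▸ keyN s hs
  · rintro ⟨k, hk⟩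
    refine const_of_hasDerivAt_zero_s13 hIo hIc (fun s hs => ?_)
    have hN0 : HasDerivAt (fun σ : ℝ => ⟪N σ, U⟫) 0 s := by
      refine (hasDerivAt_const s k).congr_of_eventuallyEq ?_
      filter_upwards [hIo.mem_nhds hs] with x hx using hk x hx
    have h0 := hN0.unique (keyN s hs)
    have hz : (a * s + b) * ⟪B s, U⟫ - ⟪T s, U⟫ = 0 := by
      rcases mul_eq_zero.1 h0.symm with h | h
      · exact absurd h (hκ s hs).ne'
      · exact h
    have : (a / (Real.sqrt (1 + (a * s + b) ^ 2)) ^ 3)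
        * (⟪T s, U⟫ - (a * s + b) * ⟪B s, U⟫) = 0 := by
      rw [show ⟪T s, U⟫ - (a * s + b) * ⟪B s, U⟫
          = -((a * s + b) * ⟪B s, U⟫ - ⟪T s, U⟫) by ring, hz]
      ring
    exact this ▸ keyF s hs
end
end

section
/- The curve α(s) = (1/a)√(1+(as+b)²)·(sin ψ₀ cos(θ(s)/sin ψ₀), sin ψ₀ sin(θ(s)/sin ψ₀), cos ψ₀), with θ(s) = c + arctan(as+b), a > 0, 0 < ψ₀ < π/2, is parametrized by arc length: ‖α'(s)‖ = 1 for all s. -/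
open Real Set
open scoped RealInnerProductSpace

noncomputable section

/-- The circle at angle `ψ` on the unit sphere, parametrized by arc length. -/
def ycirc (ψ t : ℝ) : E3 :=
  e3 (Real.sin ψ * Real.cos (t / Real.sin ψ)) (Real.sin ψ * Real.sin (t / Real.sin ψ)) (Real.cos ψ)

/-- The derivative of `ycirc ψ`. -/
def ycirc' (ψ t : ℝ) : E3 :=
  e3 (-Real.sin (t / Real.sin ψ)) (Real.cos (t / Real.sin ψ)) 0

lemma e3_zero (x y z : ℝ) : e3 x y z 0 = x := rfl
lemma e3_one (x y z : ℝ) : e3 x y z 1 = y := rfl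
lemma e3_two (x y z : ℝ) : e3 x y z 2 = z := rfl

lemma hasDerivAt_e3 {x y z : ℝ → ℝ} {x' y' z' t : ℝ}
    (hx : HasDerivAt x x' t) (hy : HasDerivAt y y' t) (hz : HasDerivAt z z' t) :
    HasDerivAt (fun σ => e3 (x σ) (y σ) (z σ)) (e3 x' y' z') t := by
  have h : HasDerivAt (fun σ => (![x σ, y σ, z σ] : Fin 3 → ℝ)) ![x', y', z'] t := by
    rw [hasDerivAt_pi]
    intro i; fin_cases i <;> simpa
  exact ((PiLp.continuousLinearEquiv 2 ℝ fun _ : Fin 3 => ℝ).symm.toContinuousLinearMap.hasFDerivAt.comp_hasDerivAt t h)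


/-- The explicit rectifying slant helix
`α(s) = (1/a)√(1+(as+b)²) • ycirc ψ₀ (c + arctan(as+b))` is parametrized by arc
length: `‖α'(s)‖ = 1` for all `s`. -/
theorem rectifying_slant_helix_unit_speed (a b c ψ : ℝ) (ha : 0 < a)
    (hψ : ψ ∈ Set.Ioo 0 (Real.pi / 2)) :
    ∀ s : ℝ,
      ‖deriv (fun σ : ℝ => ((1 / a) * Real.sqrt (1 + (a * σ + b) ^ 2)) •
        ycirc ψ (c + Real.arctan (a * σ + b))) s‖ = 1 := by
  intro s
  have hsψ : 0 < Real.sin ψ := Real.sin_pos_of_pos_of_lt_pi hψ.1 (hψ.2.trans (by linarith [Real.pi_pos]))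
  set u := a * s + b with hu_def
  have hden : (0:ℝ) < 1 + u ^ 2 := by positivity
  set r := Real.sqrt (1 + u ^ 2) with hr_def
  have hr : 0 < r := Real.sqrt_pos.mpr hden
  have hr2 : r ^ 2 = 1 + u ^ 2 := Real.sq_sqrt hden.le
  set θ := c + Real.arctan u with hθ_def
  set φ := θ / Real.sin ψ with hφ_def
  -- derivative of u
  have hu : HasDerivAt (fun σ : ℝ => a * σ + b) a s := by
    simpa using ((hasDerivAt_id s).const_mul a).add_const b
  -- derivative of θ
  have hθ : HasDerivAt (fun σ : ℝ => c + Real.arctan (a * σ + b)) (a / (1 + u ^ 2)) s := by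
    have := ((Real.hasDerivAt_arctan u).comp s hu).const_add c
    simpa [div_eq_mul_inv, mul_comm] using this
  -- derivative of φ
  have hφ : HasDerivAt (fun σ : ℝ => (c + Real.arctan (a * σ + b)) / Real.sin ψ)
      (a / (1 + u ^ 2) / Real.sin ψ) s := hθ.div_const _
  -- derivative of f
  have hq : HasDerivAt (fun σ : ℝ => 1 + (a * σ + b) ^ 2) (2 * u * a) s := by
    simpa [mul_comm, mul_assoc] using (hu.pow 2).const_add 1
  have hf : HasDerivAt (fun σ : ℝ => (1 / a) * Real.sqrt (1 + (a * σ + b) ^ 2))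
      ((1 / a) * (2 * u * a / (2 * r))) s := (hq.sqrt hden.ne').const_mul _
  -- derivative of ycirc component curve
  have hY : HasDerivAt (fun σ : ℝ => ycirc ψ (c + Real.arctan (a * σ + b)))
      (e3 (Real.sin ψ * (-Real.sin φ * (a / (1 + u ^ 2) / Real.sin ψ)))
          (Real.sin ψ * (Real.cos φ * (a / (1 + u ^ 2) / Real.sin ψ)))
          0) s := by
    simp only [ycirc]
    exact hasDerivAt_e3 ((hφ.cos).const_mul _) ((hφ.sin).const_mul _) (hasDerivAt_const s _)
  have h := hf.smul hY
  -- clean explicit components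
  have hfval : Real.sqrt (1 + (a * s + b) ^ 2) = r := rfl
  have hD : deriv (fun σ : ℝ => ((1 / a) * Real.sqrt (1 + (a * σ + b) ^ 2)) •
        ycirc ψ (c + Real.arctan (a * σ + b))) s =
      e3 (((1/a)*r) * (Real.sin ψ * (-Real.sin φ * (a / (1 + u ^ 2) / Real.sin ψ)))
            + ((1/a) * (2 * u * a / (2 * r))) * (Real.sin ψ * Real.cos φ))
         (((1/a)*r) * (Real.sin ψ * (Real.cos φ * (a / (1 + u ^ 2) / Real.sin ψ)))
            + ((1/a) * (2 * u * a / (2 * r))) * (Real.sin ψ * Real.sin φ))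
         (((1/a) * (2 * u * a / (2 * r))) * Real.cos ψ) := by
    refine Eq.trans h.deriv ?_
    have : (c + Real.arctan (a * s + b)) = θ := rfl
    ext i
    fin_cases i <;>
      simp [ycirc, e3_zero, e3_one, e3_two, this, hfval, PiLp.add_apply, PiLp.smul_apply,
        smul_eq_mul] <;> exact Or.inl (Or.inl rfl)
  rw [hD, EuclideanSpace.norm_eq, Fin.sum_univ_three]
  rw [show (1:ℝ) = Real.sqrt 1 from (Real.sqrt_one).symm]
  congr 1
  simp only [e3_zero, e3_one, e3_two, Real.norm_eq_abs, sq_abs]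
  have hc : Real.cos φ ^ 2 + Real.sin φ ^ 2 = 1 := by
    rw [add_comm]; exact Real.sin_sq_add_cos_sq φ
  have hcψ : Real.sin ψ ^ 2 + Real.cos ψ ^ 2 = 1 := Real.sin_sq_add_cos_sq ψ
  have h1 : (1 + u ^ 2) ≠ 0 := hden.ne'
  field_simp
  simp only [Real.sqrt_one]
  linear_combination
    ((r^4 + u^2*(1+u^2)^2*(Real.sin ψ)^2)) * hc
    + (u^2*(1+u^2)^2) * hcψ
    + ((r^2 + (1+u^2) - (1+u^2)^2)) * hr2
end
end
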